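/- Fix 0 < a < 1. Define homeomorphisms F_1, F_2 of [0,1] by F_1(t) = t + (a − t)t for 0 ≤ t ≤ a and F_1(t) = t + (1 − t)(t − a) for a ≤ t ≤ 1; F_2(t) = t + (a − t)t² for 0 ≤ t ≤ a and F_2(t) = t + (1 − t²)(t − a) for a ≤ t ≤ 1. Let f_1, f_2 be the induced homeomorphisms of the circle S¹ = ℝ/ℤ, and let 𝓕 = {S¹; f_1, f_2}. Then: (a) 𝓕 does not have the average shadowing property; and (b) every point x ∈ S¹ is chain recurrent for 𝓕. -/

import Mathlib

open Filter Finset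

/-- Composition along σ: `IFSIter f σ n = f (σ (n-1)) ∘ ⋯ ∘ f (σ 0)`, with `IFSIter f σ 0 = id`. -/
def IFSIter {X : Type*} {Λ : Type*} (f : Λ → X → X) (σ : ℕ → Λ) : ℕ → X → X
  | 0 => id
  | n + 1 => f (σ n) ∘ IFSIter f σ n

/-- `(x i)` is a δ-average pseudo-orbit of the IFS `f`. -/
def IsAvgPseudoOrbit {X : Type*} [MetricSpace X] {Λ : Type*}
    (f : Λ → X → X) (δ : ℝ) (x : ℕ → X) : Prop :=
  ∃ N : ℕ, ∃ σ : ℕ → Λ, ∀ n : ℕ, N ≤ n →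
    (1 / n : ℝ) * ∑ i ∈ Finset.range n, dist (f (σ i) (x i)) (x (i + 1)) < δ

/-- `(x i)` is ε-shadowed in average by the point `z`. -/
def AvgShadowedBy {X : Type*} [MetricSpace X] {Λ : Type*}
    (f : Λ → X → X) (ε : ℝ) (x : ℕ → X) (z : X) : Prop :=
  ∃ σ : ℕ → Λ,
    Filter.limsup (fun n : ℕ =>
      (1 / n : ℝ) * ∑ i ∈ Finset.range n, dist (IFSIter f σ i z) (x i)) Filter.atTop < ε

/-- The IFS `f` has the average shadowing property. -/
def HasAvgShadowing {X : Type*} [MetricSpace X] {Λ : Type*} (f : Λ → X → X) : Prop :=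
  ∀ ε : ℝ, 0 < ε → ∃ δ : ℝ, 0 < δ ∧
    ∀ x : ℕ → X, IsAvgPseudoOrbit f δ x → ∃ z : X, AvgShadowedBy f ε x z

/-- An ε-chain of the IFS `f` from `x` to `y`. -/
def IsEpsChain {X : Type*} [MetricSpace X] {Λ : Type*}
    (f : Λ → X → X) (ε : ℝ) (x y : X) : Prop :=
  ∃ n : ℕ, 0 < n ∧ ∃ p : ℕ → X, ∃ lam : ℕ → Λ,
    p 0 = x ∧ p n = y ∧ ∀ i < n, dist (f (lam i) (p i)) (p (i + 1)) ≤ ε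

/-- `x` is a chain recurrent point of the IFS `f`. -/
def ChainRecurrentPt {X : Type*} [MetricSpace X] {Λ : Type*}
    (f : Λ → X → X) (x : X) : Prop :=
  ∀ ε : ℝ, 0 < ε → IsEpsChain f ε x x

/-- The two interval homeomorphisms of Example 7, pieced together by a case split at `a`. -/
noncomputable def exampleF (a : ℝ) : Fin 2 → ℝ → ℝ :=
  ![fun t => if t ≤ a then t + (a - t) * t else t + (1 - t) * (t - a),
    fun t => if t ≤ a then t + (a - t) * t ^ 2 else t + (1 - t ^ 2) * (t - a)]


/-! ### Auxiliary lemmas -/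

section Aux

lemma exF0_apply (a t : ℝ) :
    exampleF a 0 t = if t ≤ a then t + (a - t) * t else t + (1 - t) * (t - a) := rfl

lemma exF1_apply (a t : ℝ) :
    exampleF a 1 t = if t ≤ a then t + (a - t) * t ^ 2 else t + (1 - t ^ 2) * (t - a) := rfl

lemma fin2_cases (j : Fin 2) : j = 0 ∨ j = 1 := by
  rcases j with ⟨j, hj⟩
  interval_cases j
  · left; rfl
  · right; rfl

lemma exF_cont (a : ℝ) (j : Fin 2) : Continuous (exampleF a j) := by
  fin_cases j <;>
  · show Continuous fun t : ℝ => if t ≤ a then _ else _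
    apply Continuous.if_le (by fun_prop) (by fun_prop) continuous_id continuous_const
    intro x hx
    simp only [id_eq] at hx
    subst hx
    ring

lemma exF_zero (a : ℝ) (ha0 : 0 ≤ a) (j : Fin 2) : exampleF a j 0 = 0 := by
  rcases fin2_cases j with rfl | rfl
  · rw [exF0_apply, if_pos ha0]; ring
  · rw [exF1_apply, if_pos ha0]; ring

lemma exF_a (a : ℝ) (j : Fin 2) : exampleF a j a = a := by
  rcases fin2_cases j with rfl | rfl
  · rw [exF0_apply, if_pos le_rfl]; ring
  · rw [exF1_apply, if_pos le_rfl]; ring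

lemma exF_ge (a : ℝ) (ha1 : a ≤ 1) (j : Fin 2) {t : ℝ} (h0 : 0 ≤ t) (h1 : t ≤ 1) :
    t ≤ exampleF a j t := by
  rcases fin2_cases j with rfl | rfl
  · rw [exF0_apply]; split <;> nlinarith
  · rw [exF1_apply]; split
    · nlinarith
    · nlinarith [mul_nonneg (mul_nonneg (sub_nonneg.2 h1) (by linarith : (0:ℝ) ≤ 1 + t))
        (by linarith : (0:ℝ) ≤ t - a)]

lemma exF_le_a (a : ℝ) (ha1 : a ≤ 1) (j : Fin 2) {t : ℝ} (h0 : 0 ≤ t) (hta : t ≤ a) :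
    exampleF a j t ≤ a := by
  rcases fin2_cases j with rfl | rfl
  · rw [exF0_apply, if_pos hta]; nlinarith
  · rw [exF1_apply, if_pos hta]
    nlinarith [mul_nonneg (mul_nonneg (sub_nonneg.2 hta) (by linarith : (0:ℝ) ≤ 1 - t))
      (by linarith : (0:ℝ) ≤ 1 + t)]

lemma exF_le_two_sub (a : ℝ) (ha0 : 0 ≤ a) (ha1 : a ≤ 1) (j : Fin 2) {t : ℝ}
    (h0 : 0 ≤ t) (h1 : t ≤ 1) : exampleF a j t ≤ 2 - t := by
  rcases fin2_cases j with rfl | rfl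
  · rw [exF0_apply]; split <;> nlinarith
  · rw [exF1_apply]; split
    · nlinarith [mul_nonneg (mul_nonneg (sub_nonneg.2 ‹t ≤ a›) (by linarith : (0:ℝ) ≤ 1 - t))
        (by linarith : (0:ℝ) ≤ 1 + t)]
    · nlinarith [mul_nonneg (sub_nonneg.2 h1)
        (by nlinarith [mul_nonneg (by linarith : (0:ℝ) ≤ 1 - (t-a)) (by linarith : (0:ℝ) ≤ 1 + t)] :
          (0:ℝ) ≤ 2 - (1+t)*(t-a))]

lemma exF0_le_one (a : ℝ) (ha0 : 0 ≤ a) (ha1 : a ≤ 1) {t : ℝ} (h0 : 0 ≤ t) (h1 : t ≤ 1) :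
    exampleF a 0 t ≤ 1 := by
  rw [exF0_apply]; split <;> nlinarith

lemma exF0_lt_one (a : ℝ) (ha0 : 0 ≤ a) (ha1 : a < 1) {t : ℝ} (h0 : 0 ≤ t) (h1 : t < 1) :
    exampleF a 0 t < 1 := by
  rw [exF0_apply]; split <;> nlinarith

end Aux

section Iter

variable {a : ℝ}

/-- Iterates of `F₁` starting in `[0,a]` stay in `[0,a]`. -/
lemma iter_low (ha0 : 0 < a) (ha1 : a < 1) {t : ℝ} (h0 : 0 ≤ t) (hta : t ≤ a) (m : ℕ) :
    0 ≤ (exampleF a 0)^[m] t ∧ (exampleF a 0)^[m] t ≤ a := by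
  induction m with
  | zero => exact ⟨h0, hta⟩
  | succ m ih =>
    rw [Function.iterate_succ_apply']
    refine ⟨le_trans ih.1 (exF_ge a ha1.le 0 ih.1 (le_trans ih.2 ha1.le)), ?_⟩
    exact exF_le_a a ha1.le 0 ih.1 ih.2

/-- Iterates of `F₁` starting in `[a,1)` stay in `[a,1)`, above the start. -/
lemma iter_high (ha0 : 0 < a) (ha1 : a < 1) {t : ℝ} (hat : a ≤ t) (h1 : t < 1) (m : ℕ) :
    t ≤ (exampleF a 0)^[m] t ∧ (exampleF a 0)^[m] t < 1 := by
  induction m with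
  | zero => exact ⟨le_rfl, h1⟩
  | succ m ih =>
    have h0' : (0:ℝ) ≤ (exampleF a 0)^[m] t := le_trans (le_trans ha0.le hat) ih.1
    rw [Function.iterate_succ_apply']
    exact ⟨le_trans ih.1 (exF_ge a ha1.le 0 h0' ih.2.le),
      exF0_lt_one a ha0.le ha1 h0' ih.2⟩

lemma escape_low (ha0 : 0 < a) (ha1 : a < 1) {t η : ℝ} (ht : 0 < t) (hta : t ≤ a)
    (hη : 0 < η) : ∃ m : ℕ, a - η ≤ (exampleF a 0)^[m] t := by
  have key : ∀ m : ℕ, a - η ≤ (exampleF a 0)^[m] t ∨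
      t + m * (η * t) ≤ (exampleF a 0)^[m] t := by
    intro m
    induction m with
    | zero => right; simp
    | succ m ih =>
      have hmem := iter_low ha0 ha1 ht.le hta m
      set s := (exampleF a 0)^[m] t with hs
      have hstep : s ≤ exampleF a 0 s := exF_ge a ha1.le 0 hmem.1 (le_trans hmem.2 ha1.le)
      rw [Function.iterate_succ_apply', ← hs]
      by_cases hc : a - η ≤ s
      · left; linarith
      · push_neg at hc
        rcases ih with h | h
        · exact absurd h (by linarith)
        · right
          have hform : exampleF a 0 s = s + (a - s) * s := by
            rw [exF0_apply, if_pos hmem.2]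
          have hmn : (0:ℝ) ≤ (m:ℝ) * (η * t) := by positivity
          have hst : t ≤ s := by linarith
          have : η * t ≤ (a - s) * s :=
            mul_le_mul (by linarith) hst ht.le (by linarith)
          rw [hform]
          push_cast
          linarith
  obtain h := key ⌈a / (η * t)⌉₊
  rcases h with h | h
  · exact ⟨_, h⟩
  · refine ⟨⌈a / (η * t)⌉₊, le_trans ?_ h⟩
    have := Nat.le_ceil (a / (η * t))
    have hηt : 0 < η * t := mul_pos hη ht
    have : a ≤ ⌈a / (η * t)⌉₊ * (η * t) := by
      rw [← div_le_iff₀ hηt] at *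
      linarith [Nat.le_ceil (a / (η * t))]
    linarith

lemma escape_high (ha0 : 0 < a) (ha1 : a < 1) {t η : ℝ} (hat : a < t) (ht1 : t < 1)
    (hη : 0 < η) : ∃ m : ℕ, 1 - η ≤ (exampleF a 0)^[m] t := by
  have key : ∀ m : ℕ, 1 - η ≤ (exampleF a 0)^[m] t ∨
      t + m * (η * (t - a)) ≤ (exampleF a 0)^[m] t := by
    intro m
    induction m with
    | zero => right; simp
    | succ m ih =>
      have hmem := iter_high ha0 ha1 hat.le ht1 m
      set s := (exampleF a 0)^[m] t with hs
      have h0' : (0:ℝ) ≤ s := le_trans (le_trans ha0.le hat.le) hmem.1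
      have hstep : s ≤ exampleF a 0 s := exF_ge a ha1.le 0 h0' hmem.2.le
      rw [Function.iterate_succ_apply', ← hs]
      by_cases hc : 1 - η ≤ s
      · left; linarith
      · push_neg at hc
        rcases ih with h | h
        · exact absurd h (by linarith)
        · right
          have hsa : ¬ (s ≤ a) := by
            push_neg
            calc a < t := hat
            _ ≤ s := hmem.1
          have hform : exampleF a 0 s = s + (1 - s) * (s - a) := by
            rw [exF0_apply, if_neg hsa]
          push_neg at hsa
          have hst : t ≤ s := hmem.1
          have : η * (t - a) ≤ (1 - s) * (s - a) :=
            mul_le_mul (by linarith) (by linarith) (by linarith) (by linarith)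
          rw [hform]
          push_cast
          linarith
  obtain h := key ⌈1 / (η * (t - a))⌉₊
  rcases h with h | h
  · exact ⟨_, h⟩
  · refine ⟨_, le_trans ?_ h⟩
    have hηt : 0 < η * (t - a) := mul_pos hη (by linarith)
    have : 1 ≤ ⌈1 / (η * (t - a))⌉₊ * (η * (t - a)) := by
      rw [← div_le_iff₀ hηt]
      linarith [Nat.le_ceil (1 / (η * (t - a)))]
    linarith [ha0]

end Iter

section Circle

lemma circ_dist_eq (s t : ℝ) :
    dist ((s : ℝ) : AddCircle (1:ℝ)) ((t : ℝ) : AddCircle (1:ℝ)) = |s - t - round (s - t)| := by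
  rw [dist_eq_norm, ← AddCircle.coe_sub, AddCircle.norm_eq]
  simp

lemma circ_dist_le (s t : ℝ) :
    dist ((s : ℝ) : AddCircle (1:ℝ)) ((t : ℝ) : AddCircle (1:ℝ)) ≤ |s - t| := by
  rw [circ_dist_eq]
  simpa using round_le (s - t) 0

lemma circ_dist_lower {s t : ℝ} (h : |s - t| ≤ 1) :
    min |s - t| (1 - |s - t|) ≤ dist ((s : ℝ) : AddCircle (1:ℝ)) ((t : ℝ) : AddCircle (1:ℝ)) := by
  rw [circ_dist_eq]
  rcases eq_or_ne (round (s - t)) 0 with h0 | h0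
  · rw [h0]
    simpa using min_le_left _ _
  · refine le_trans (min_le_right _ _) ?_
    have h1 : (1:ℝ) ≤ |(round (s - t) : ℝ)| := by
      rw [← Int.cast_abs]
      exact_mod_cast Int.one_le_abs (by simpa using h0)
    calc 1 - |s - t| ≤ |(round (s - t) : ℝ)| - |s - t| := by linarith
    _ ≤ |s - t - round (s - t)| := by
        rw [abs_sub_comm (s - t)]
        exact abs_sub_abs_le_abs_sub _ _
lemma circ_rep_exists (x : AddCircle (1:ℝ)) :
    ∃ t : ℝ, 0 ≤ t ∧ t < 1 ∧ ((t : ℝ) : AddCircle (1:ℝ)) = x := by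
  obtain ⟨⟨t, ht⟩, h⟩ := (AddCircle.equivIco 1 0).symm.surjective x
  exact ⟨t, by simpa using ht.1, by simpa using ht.2, h⟩

lemma circ_dist_le_one (x y : AddCircle (1:ℝ)) : dist x y ≤ 1 := by
  obtain ⟨s, hs0, hs1, rfl⟩ := circ_rep_exists x
  obtain ⟨t, ht0, ht1, rfl⟩ := circ_rep_exists y
  refine le_trans (circ_dist_le s t) ?_
  rw [abs_sub_le_iff]
  constructor <;> linarith

lemma circ_one : (((1:ℝ)) : AddCircle (1:ℝ)) = 0 := AddCircle.coe_period 1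

lemma circ_coe_sub_one (s : ℝ) : ((s - 1 : ℝ) : AddCircle (1:ℝ)) = ((s : ℝ) : AddCircle (1:ℝ)) := by
  rw [AddCircle.coe_sub, circ_one, sub_zero]

lemma circ_zero : (((0:ℝ)) : AddCircle (1:ℝ)) = 0 := by
  norm_cast

end Circle

section Chain

variable {X : Type*} [MetricSpace X] {Λ : Type*} {f : Λ → X → X} {ε : ℝ}

lemma chain_single {x y : X} (j : Λ) (h : dist (f j x) y ≤ ε) : IsEpsChain f ε x y := by
  refine ⟨1, one_pos, (fun i => if i = 0 then x else y), (fun _ => j), by simp, by simp, ?_⟩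
  intro i hi
  interval_cases i
  simpa using h

lemma chain_trans {x y z : X} (h1 : IsEpsChain f ε x y) (h2 : IsEpsChain f ε y z) :
    IsEpsChain f ε x z := by
  obtain ⟨n, hn, p, lam, hp0, hpn, hstep⟩ := h1
  obtain ⟨m, hm, q, mu, hq0, hqm, hqstep⟩ := h2
  refine ⟨n + m, by omega, (fun i => if i ≤ n then p i else q (i - n)),
    (fun i => if i < n then lam i else mu (i - n)), ?_, ?_, ?_⟩
  · simpa using hp0
  · have h1 : ¬ (n + m ≤ n) := by omega
    have h2 : n + m - n = m := by omega
    simp [h1, h2, hqm]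
  · intro i hi
    rcases lt_trichotomy i n with h | h | h
    · have e1 : i ≤ n := h.le
      have e2 : i + 1 ≤ n := h
      simp only [if_pos e1, if_pos e2, if_pos h]
      exact hstep i h
    · subst h
      have e1 : ¬ (i < i) := lt_irrefl i
      have e2 : ¬ (i + 1 ≤ i) := by omega
      simp only [if_pos le_rfl, if_neg e1, if_neg e2, Nat.sub_self,
        show i + 1 - i = 1 by omega, hpn, ← hq0]
      simpa using hqstep 0 hm
    · have e1 : ¬ (i ≤ n) := by omega
      have e2 : ¬ (i + 1 ≤ n) := by omega
      have e3 : ¬ (i < n) := by omega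
      simp only [if_neg e1, if_neg e2, if_neg e3, show i + 1 - n = (i - n) + 1 by omega]
      exact hqstep (i - n) (by omega)

end Chain

section ChainRec

theorem aux_chainRec (a : ℝ) (ha0 : 0 < a) (ha1 : a < 1)
    (f : Fin 2 → AddCircle (1 : ℝ) → AddCircle (1 : ℝ))
    (hind : ∀ i : Fin 2, ∀ t ∈ Set.Ico (0 : ℝ) 1,
      f i ((t : ℝ) : AddCircle (1 : ℝ)) = ((exampleF a i t : ℝ) : AddCircle (1 : ℝ))) :
    ∀ x : AddCircle (1 : ℝ), ChainRecurrentPt f x := by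
  intro x ε hε
  set G := exampleF a 0 with hGdef
  have hind0 : ∀ t : ℝ, 0 ≤ t → t < 1 →
      f 0 ((t : ℝ) : AddCircle (1:ℝ)) = ((G t : ℝ) : AddCircle (1:ℝ)) :=
    fun t h1 h2 => hind 0 t ⟨h1, h2⟩
  have step : ∀ t : ℝ, 0 ≤ t → t < 1 → ∀ u : ℝ, |G t - u| ≤ ε →
      IsEpsChain f ε ((t:ℝ) : AddCircle (1:ℝ)) ((u:ℝ) : AddCircle (1:ℝ)) := by
    intro t h0 h1 u hu
    refine chain_single 0 ?_
    rw [hind0 t h0 h1]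
    exact le_trans (circ_dist_le _ _) hu
  have orbit : ∀ s : ℝ, (∀ m : ℕ, 0 ≤ G^[m] s ∧ G^[m] s < 1) →
      ∀ (k : ℕ) (w : AddCircle (1:ℝ)),
      IsEpsChain f ε w ((s:ℝ) : AddCircle (1:ℝ)) →
      IsEpsChain f ε w ((G^[k] s : ℝ) : AddCircle (1:ℝ)) := by
    intro s hmem k w
    induction k with
    | zero => intro h; simpa using h
    | succ k ih =>
      intro h
      refine chain_trans (ih h) (chain_single 0 ?_)
      rw [hind0 _ (hmem k).1 (hmem k).2, Function.iterate_succ_apply']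
      simp [hε.le]
  -- iterates in the low zone stay in `[0,1)`
  have memlow : ∀ t : ℝ, 0 ≤ t → t ≤ a → ∀ m : ℕ, 0 ≤ G^[m] t ∧ G^[m] t < 1 := by
    intro t h0 hta m
    exact ⟨(iter_low ha0 ha1 h0 hta m).1, lt_of_le_of_lt (iter_low ha0 ha1 h0 hta m).2 ha1⟩
  have memhigh : ∀ t : ℝ, a ≤ t → t < 1 → ∀ m : ℕ, 0 ≤ G^[m] t ∧ G^[m] t < 1 := by
    intro t hat h1 m
    exact ⟨le_trans ha0.le (le_trans hat (iter_high ha0 ha1 hat h1 m).1),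
      (iter_high ha0 ha1 hat h1 m).2⟩
  -- monotonicity of one step applied to iterates (low zone)
  have monolow : ∀ t : ℝ, 0 ≤ t → t ≤ a → ∀ m : ℕ, G^[m] t ≤ G^[m+1] t := by
    intro t h0 hta m
    rw [Function.iterate_succ_apply']
    exact exF_ge a ha1.le 0 (iter_low ha0 ha1 h0 hta m).1
      (le_trans (iter_low ha0 ha1 h0 hta m).2 ha1.le)
  have monohigh : ∀ t : ℝ, a ≤ t → t < 1 → ∀ m : ℕ, G^[m] t ≤ G^[m+1] t := by
    intro t hat h1 m
    rw [Function.iterate_succ_apply']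
    exact exF_ge a ha1.le 0 (memhigh t hat h1 m).1 (memhigh t hat h1 m).2.le
  -- CL1 : climb from a point of `(0,a]` to `a`
  have CL1 : ∀ t : ℝ, 0 < t → t ≤ a →
      IsEpsChain f ε ((t:ℝ) : AddCircle (1:ℝ)) ((a:ℝ) : AddCircle (1:ℝ)) := by
    intro t ht hta
    have he1 : 0 < min ε a := lt_min hε ha0
    obtain ⟨m, hm⟩ := escape_low ha0 ha1 ht hta he1
    have hlt1 : t < 1 := lt_of_le_of_lt hta ha1
    have c0 : IsEpsChain f ε ((t:ℝ) : AddCircle (1:ℝ)) ((G t : ℝ) : AddCircle (1:ℝ)) :=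
      step t ht.le hlt1 (G t) (by simp [hε.le])
    have hmem' : ∀ k : ℕ, 0 ≤ G^[k] (G t) ∧ G^[k] (G t) < 1 := by
      intro k
      rw [← Function.iterate_succ_apply]
      exact memlow t ht.le hta (k+1)
    have c1 := orbit (G t) hmem' m _ c0
    rw [← Function.iterate_succ_apply] at c1
    refine chain_trans c1 (chain_single 0 ?_)
    rw [hind0 _ (memlow t ht.le hta (m+1)).1 (memlow t ht.le hta (m+1)).2]
    refine le_trans (circ_dist_le _ _) ?_
    have e2 : G (G^[m+1] t) = G^[m+1+1] t := (Function.iterate_succ_apply' G (m+1) t).symm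
    rw [e2]
    have h1 := monolow t ht.le hta m
    have h2 := monolow t ht.le hta (m+1)
    have h3 := (iter_low ha0 ha1 ht.le hta (m+1+1)).2
    rw [abs_of_nonpos (by linarith)]
    have hmin : min ε a ≤ ε := min_le_left _ _
    linarith
  -- CL2 : climb from a point of `(a,1)` to `0`
  have CL2 : ∀ t : ℝ, a < t → t < 1 →
      IsEpsChain f ε ((t:ℝ) : AddCircle (1:ℝ)) (0 : AddCircle (1:ℝ)) := by
    intro t hat h1
    have he2 : 0 < min ε 1 := lt_min hε one_pos
    obtain ⟨m, hm⟩ := escape_high ha0 ha1 hat h1 he2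
    have h0t : (0:ℝ) ≤ t := le_trans ha0.le hat.le
    have c0 : IsEpsChain f ε ((t:ℝ) : AddCircle (1:ℝ)) ((G t : ℝ) : AddCircle (1:ℝ)) :=
      step t h0t h1 (G t) (by simp [hε.le])
    have hmem' : ∀ k : ℕ, 0 ≤ G^[k] (G t) ∧ G^[k] (G t) < 1 := by
      intro k
      rw [← Function.iterate_succ_apply]
      exact memhigh t hat.le h1 (k+1)
    have c1 := orbit (G t) hmem' m _ c0
    rw [← Function.iterate_succ_apply] at c1
    refine chain_trans c1 (chain_single 0 ?_)
    rw [hind0 _ (memhigh t hat.le h1 (m+1)).1 (memhigh t hat.le h1 (m+1)).2, ← circ_one]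
    refine le_trans (circ_dist_le _ _) ?_
    have e2 : G (G^[m+1] t) = G^[m+1+1] t := (Function.iterate_succ_apply' G (m+1) t).symm
    rw [e2]
    have h2 := monohigh t hat.le h1 m
    have h3 := monohigh t hat.le h1 (m+1)
    have h4 := (memhigh t hat.le h1 (m+1+1)).2
    rw [abs_of_nonpos (by linarith)]
    have hmin : min ε 1 ≤ ε := min_le_left _ _
    linarith
  -- small jump sizes
  obtain ⟨e3, he3pos, he3a, he3e⟩ : ∃ e3 : ℝ, 0 < e3 ∧ e3 ≤ (1-a)/2 ∧ e3 ≤ ε :=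
    ⟨min ε ((1-a)/2), lt_min hε (by linarith), min_le_right _ _, min_le_left _ _⟩
  obtain ⟨va, hva0, hvaa, hvae⟩ : ∃ va : ℝ, 0 < va ∧ va ≤ a ∧ va ≤ ε :=
    ⟨min ε a, lt_min hε ha0, min_le_right _ _, min_le_left _ _⟩
  -- CL2' : from `a` to `0`
  have CL2' : IsEpsChain f ε ((a:ℝ) : AddCircle (1:ℝ)) (0 : AddCircle (1:ℝ)) := by
    have hav : a < a + e3 := by linarith
    have hv1 : a + e3 < 1 := by linarith
    refine chain_trans (step a ha0.le ha1 (a + e3) ?_) (CL2 (a + e3) hav hv1)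
    rw [hGdef, exF_a]
    rw [abs_of_nonpos (by linarith)]
    linarith
  -- chain from `0` to `a`
  have zeroToA : IsEpsChain f ε (0 : AddCircle (1:ℝ)) ((a:ℝ) : AddCircle (1:ℝ)) := by
    rw [← circ_zero]
    refine chain_trans (step 0 le_rfl one_pos va ?_) (CL1 va hva0 hvaa)
    rw [hGdef, exF_zero a ha0.le]
    rw [abs_of_nonpos (by linarith)]
    linarith
  -- chain from `0` to any point of `(0,a)` exactly
  have zeroToLow : ∀ t0 : ℝ, 0 < t0 → t0 < a →
      IsEpsChain f ε (0 : AddCircle (1:ℝ)) ((t0:ℝ) : AddCircle (1:ℝ)) := by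
    intro t0 ht0 hta
    obtain ⟨m, hm⟩ := escape_low ha0 ha1 hva0 hvaa (show 0 < a - t0 by linarith)
    have hcont : ContinuousOn (G^[m]) (Set.Icc 0 va) := ((exF_cont a 0).iterate m).continuousOn
    have hG0 : G^[m] 0 = 0 := Function.iterate_fixed (exF_zero a ha0.le 0) m
    have hmem : t0 ∈ Set.Icc (G^[m] 0) (G^[m] va) := by
      rw [hG0]
      exact ⟨ht0.le, by linarith⟩
    obtain ⟨w, hwmem, hw⟩ := intermediate_value_Icc hva0.le hcont hmem
    rw [← circ_zero]
    have hw0 : 0 ≤ w := hwmem.1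
    have hwa : w ≤ a := le_trans hwmem.2 hvaa
    have c0 : IsEpsChain f ε (((0:ℝ)) : AddCircle (1:ℝ)) ((w:ℝ) : AddCircle (1:ℝ)) := by
      refine step 0 le_rfl one_pos w ?_
      rw [hGdef, exF_zero a ha0.le, abs_of_nonpos (by linarith)]
      linarith [hwmem.2]
    have c1 := orbit w (memlow w hw0 hwa) m _ c0
    rw [hw] at c1
    exact c1
  -- chain from `a` to any point of `[a,1)` exactly
  have aToHigh : ∀ t0 : ℝ, a ≤ t0 → t0 < 1 →
      IsEpsChain f ε ((a:ℝ) : AddCircle (1:ℝ)) ((t0:ℝ) : AddCircle (1:ℝ)) := by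
    intro t0 hat0 ht01
    have hav : a < a + e3 := by linarith
    have hv1 : a + e3 < 1 := by linarith
    obtain ⟨m, hm⟩ := escape_high ha0 ha1 hav hv1 (show 0 < 1 - t0 by linarith)
    have hcont : ContinuousOn (G^[m]) (Set.Icc a (a + e3)) := ((exF_cont a 0).iterate m).continuousOn
    have hGa : G^[m] a = a := Function.iterate_fixed (exF_a a 0) m
    have hmem : t0 ∈ Set.Icc (G^[m] a) (G^[m] (a + e3)) := by
      rw [hGa]
      exact ⟨hat0, by linarith⟩
    obtain ⟨w, hwmem, hw⟩ := intermediate_value_Icc hav.le hcont hmem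
    have hwa : a ≤ w := hwmem.1
    have hw1 : w < 1 := lt_of_le_of_lt hwmem.2 hv1
    have c0 : IsEpsChain f ε ((a:ℝ) : AddCircle (1:ℝ)) ((w:ℝ) : AddCircle (1:ℝ)) := by
      refine step a ha0.le ha1 w ?_
      rw [hGdef, exF_a, abs_of_nonpos (by linarith)]
      linarith [hwmem.2]
    have c1 := orbit w (memhigh w hwa hw1) m _ c0
    rw [hw] at c1
    exact c1
  -- assemble
  obtain ⟨t0, ht00, ht01, hrep⟩ := circ_rep_exists x
  rw [← hrep]
  have toA : IsEpsChain f ε ((t0:ℝ) : AddCircle (1:ℝ)) ((a:ℝ) : AddCircle (1:ℝ)) := by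
    rcases eq_or_lt_of_le ht00 with h | h
    · rw [← h, circ_zero]
      exact zeroToA
    · rcases le_or_gt t0 a with h2 | h2
      · exact CL1 t0 h h2
      · exact chain_trans (CL2 t0 h2 ht01) zeroToA
  have fromA : IsEpsChain f ε ((a:ℝ) : AddCircle (1:ℝ)) ((t0:ℝ) : AddCircle (1:ℝ)) := by
    rcases le_or_gt a t0 with h | h
    · exact aToHigh t0 h ht01
    · rcases eq_or_lt_of_le ht00 with h2 | h2
      · rw [← h2, circ_zero]
        exact CL2'
      · exact chain_trans CL2' (zeroToLow t0 h2 h)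
  exact chain_trans toA fromA

end ChainRec

section Counting

lemma sq_le_four_pow (m : ℕ) : m * m ≤ 4 ^ m := by
  induction m with
  | zero => norm_num
  | succ m ih =>
    have h1 : m < 2 ^ m := Nat.lt_two_pow_self
    have h2 : 2 ^ m ≤ 4 ^ m := Nat.pow_le_pow_left (by norm_num) m
    have h4 : 4 ^ (m + 1) = 4 * 4 ^ m := by rw [pow_succ]; ring
    have hexp : (m+1) * (m+1) = m*m + 2*m + 1 := by ring
    omega

lemma log_boundary {i : ℕ} (h : Nat.log 4 (i+1) ≠ Nat.log 4 (i+2)) :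
    4 ^ (Nat.log 4 (i+2)) = i + 2 := by
  have hle : 4 ^ (Nat.log 4 (i+2)) ≤ i + 2 := Nat.pow_log_le_self 4 (by omega)
  rcases eq_or_lt_of_le hle with h1 | h1
  · exact h1
  · exfalso
    have h2 : 4 ^ (Nat.log 4 (i+2)) ≤ i + 1 := by omega
    have h3 : Nat.log 4 (i+2) ≤ Nat.log 4 (i+1) :=
      (Nat.le_log_iff_pow_le (by norm_num) (by omega)).mpr h2
    have h4 : Nat.log 4 (i+1) ≤ Nat.log 4 (i+2) := Nat.log_mono_right (by omega)
    omega

lemma card_boundaries (n : ℕ) :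
    ((Finset.range n).filter (fun i => Nat.log 4 (i+1) ≠ Nat.log 4 (i+2))).card
      ≤ Nat.sqrt (n+1) + 1 := by
  have := Finset.card_le_card_of_injOn (fun i => Nat.log 4 (i+2))
    (s := (Finset.range n).filter (fun i => Nat.log 4 (i+1) ≠ Nat.log 4 (i+2)))
    (t := Finset.range (Nat.sqrt (n+1) + 1)) ?_ ?_
  · simpa using this
  · intro i hi
    simp only [Finset.coe_filter, Set.mem_setOf_eq, Finset.mem_range] at hi
    rw [Finset.mem_coe, Finset.mem_range]
    have hpow := log_boundary hi.2
    have hsq := sq_le_four_pow (Nat.log 4 (i+2))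
    have : Nat.log 4 (i+2) ≤ Nat.sqrt (n+1) := Nat.le_sqrt.mpr (by omega)
    show Nat.log 4 (i+2) < Nat.sqrt (n+1) + 1
    omega
  · intro i hi j hj hij
    simp only [Finset.coe_filter, Set.mem_setOf_eq, Finset.mem_range] at hi hj
    have h1 := log_boundary hi.2
    have h2 := log_boundary hj.2
    have hij' : Nat.log 4 (i+2) = Nat.log 4 (j+2) := hij
    rw [hij'] at h1
    omega

lemma avg_boundary_small {δ : ℝ} (hδ : 0 < δ) :
    ∃ N : ℕ, ∀ n : ℕ, N ≤ n → (1/n : ℝ) * (Nat.sqrt (n+1) + 1) < δ := by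
  refine ⟨max 16 ⌈(16:ℝ)/δ^2⌉₊ + 1, fun n hn => ?_⟩
  have h16 : (16:ℕ) ≤ n := by omega
  have hceil : (⌈(16:ℝ)/δ^2⌉₊ : ℕ) ≤ n := by omega
  have hδn : (16:ℝ)/δ^2 ≤ n := le_trans (Nat.le_ceil _) (by exact_mod_cast hceil)
  have hn0 : (0:ℝ) < n := by exact_mod_cast (by omega : 0 < n)
  have hr0 : (0:ℝ) ≤ Real.sqrt n := Real.sqrt_nonneg _
  have hrn : Real.sqrt n ^ 2 = (n:ℝ) := Real.sq_sqrt hn0.le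
  have h16' : (16:ℝ) ≤ (n:ℝ) := by exact_mod_cast h16
  have hr4 : (4:ℝ) ≤ Real.sqrt n :=
    (Real.le_sqrt (by norm_num) hn0.le).mpr (by norm_num; linarith)
  have hr4' : (4:ℝ) ≤ δ * Real.sqrt n := by
    have h1 : (4/δ) ≤ Real.sqrt n := by
      refine (Real.le_sqrt (by positivity) hn0.le).mpr ?_
      rw [div_pow]
      norm_num
      linarith
    rw [div_le_iff₀ hδ] at h1
    linarith
  have h2 : ((Nat.sqrt n : ℝ)) ≤ Real.sqrt n := by
    refine (Real.le_sqrt (by positivity) hn0.le).mpr ?_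
    exact_mod_cast Nat.sqrt_le' n
  have h1 : ((Nat.sqrt (n+1) : ℝ)) ≤ (Nat.sqrt n : ℝ) + 1 := by
    exact_mod_cast Nat.sqrt_succ_le_succ_sqrt n
  have hb : ((Nat.sqrt (n+1) : ℝ) + 1) ≤ Real.sqrt n + 2 := by linarith
  have hmono : (1/n:ℝ) * ((Nat.sqrt (n+1) : ℝ) + 1) ≤ (1/n:ℝ) * (Real.sqrt n + 2) :=
    mul_le_mul_of_nonneg_left hb (by positivity)
  refine lt_of_le_of_lt hmono ?_
  rw [one_div, inv_mul_lt_iff₀ hn0]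
  nlinarith [mul_le_mul_of_nonneg_right hr4' hr0, hr4, hrn]

end Counting

section NoShadow

theorem aux_noshadow (a : ℝ) (ha0 : 0 < a) (ha1 : a < 1)
    (f : Fin 2 → AddCircle (1 : ℝ) → AddCircle (1 : ℝ))
    (hind : ∀ i : Fin 2, ∀ t ∈ Set.Ico (0 : ℝ) 1,
      f i ((t : ℝ) : AddCircle (1 : ℝ)) = ((exampleF a i t : ℝ) : AddCircle (1 : ℝ))) :
    ¬ HasAvgShadowing f := by
  intro hshad
  have hc1a : min a (1-a) ≤ 1 - a := min_le_right _ _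
  have hca : min a (1-a) ≤ a := min_le_left _ _
  have hcpos : 0 < min a (1-a) := lt_min ha0 (by linarith)
  set c := min a (1-a) with hcdef
  -- fixed points
  have hf0 : ∀ j : Fin 2, f j (0 : AddCircle (1:ℝ)) = 0 := by
    intro j
    have h := hind j 0 ⟨le_rfl, one_pos⟩
    rw [exF_zero a ha0.le, circ_zero] at h
    exact h
  have hfa : ∀ j : Fin 2, f j ((a:ℝ) : AddCircle (1:ℝ)) = ((a:ℝ) : AddCircle (1:ℝ)) := by
    intro j
    have h := hind j a ⟨ha0.le, ha1⟩
    rw [exF_a] at h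
    exact h
  obtain ⟨δ, hδ, Hs⟩ := hshad (c/8) (by positivity)
  -- the pseudo-orbit
  set xs : ℕ → AddCircle (1:ℝ) :=
    fun i => if Even (Nat.log 4 (i+1)) then 0 else ((a:ℝ) : AddCircle (1:ℝ)) with hxs
  have hxsfix : ∀ (i : ℕ) (j : Fin 2), f j (xs i) = xs i := by
    intro i j
    by_cases h : Even (Nat.log 4 (i+1))
    · rw [hxs]; simp only [if_pos h]; exact hf0 j
    · rw [hxs]; simp only [if_neg h]; exact hfa j
  have hpo : IsAvgPseudoOrbit f δ xs := by
    obtain ⟨N, hN⟩ := avg_boundary_small hδ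
    refine ⟨N, fun _ => 0, fun n hn => ?_⟩
    have hterm : ∀ i ∈ Finset.range n, dist (f 0 (xs i)) (xs (i+1)) ≤
        (if Nat.log 4 (i+1) = Nat.log 4 (i+2) then (0:ℝ) else 1) := by
      intro i _
      rw [hxsfix i 0]
      split_ifs with h
      · have hxx : xs i = xs (i+1) := by
          rw [hxs]
          simp only [h]
        rw [hxx, dist_self]
      · exact circ_dist_le_one _ _
    have hsum1 : ∑ i ∈ Finset.range n, dist (f 0 (xs i)) (xs (i+1)) ≤
        ((Finset.range n).filter (fun i => Nat.log 4 (i+1) ≠ Nat.log 4 (i+2))).card := by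
      refine le_trans (Finset.sum_le_sum hterm) ?_
      rw [Finset.sum_ite, Finset.sum_const_zero, Finset.sum_const, zero_add, nsmul_eq_mul,
        mul_one]
    have hsum2 : ∑ i ∈ Finset.range n, dist (f 0 (xs i)) (xs (i+1)) ≤
        ((Nat.sqrt (n+1) : ℝ) + 1) := by
      refine le_trans hsum1 ?_
      have := card_boundaries n
      exact_mod_cast this
    have hfinal := hN n hn
    have hnn : (0:ℝ) ≤ 1/(n:ℝ) := by positivity
    calc (1/n : ℝ) * ∑ i ∈ Finset.range n, dist (f 0 (xs i)) (xs (i+1))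
        ≤ (1/n : ℝ) * ((Nat.sqrt (n+1) : ℝ) + 1) := mul_le_mul_of_nonneg_left hsum2 hnn
      _ < δ := hfinal
  obtain ⟨z, σ, hlim⟩ := Hs xs hpo
  -- the real orbit and its coordinates
  obtain ⟨t0, ht00, ht01, ht0⟩ := circ_rep_exists z
  set y : ℕ → AddCircle (1:ℝ) := fun i => IFSIter f σ i z with hy
  have hystep : ∀ i, y (i+1) = f (σ i) (y i) := fun i => rfl
  set u : ℕ → ℝ := fun n => Nat.rec (motive := fun _ => ℝ) t0 (fun i ui =>
    if exampleF a (σ i) ui < 1 then exampleF a (σ i) ui else exampleF a (σ i) ui - 1) n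
    with hu'
  have huS : ∀ i, u (i+1) =
      if exampleF a (σ i) (u i) < 1 then exampleF a (σ i) (u i)
      else exampleF a (σ i) (u i) - 1 := fun i => rfl
  have hu : ∀ i, (0 ≤ u i ∧ u i < 1) ∧ ((u i : ℝ) : AddCircle (1:ℝ)) = y i := by
    intro i
    induction i with
    | zero => exact ⟨⟨ht00, ht01⟩, ht0⟩
    | succ i ih =>
      obtain ⟨⟨h0, h1⟩, hcoe⟩ := ih
      have hF0 : 0 ≤ exampleF a (σ i) (u i) := le_trans h0 (exF_ge a ha1.le _ h0 h1.le)
      have hind' := hind (σ i) (u i) ⟨h0, h1⟩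
      rw [huS i]
      split_ifs with hw
      · exact ⟨⟨hF0, hw⟩, by rw [hystep i, ← hcoe, hind']⟩
      · push_neg at hw
        have hlt2 : exampleF a (σ i) (u i) < 2 := by
          have hne : u i ≠ 0 := by
            intro h
            rw [h, exF_zero a ha0.le] at hw
            linarith
          have hb := exF_le_two_sub a ha0.le ha1.le (σ i) h0 h1.le
          have h0' : 0 < u i := lt_of_le_of_ne h0 (Ne.symm hne)
          linarith
        refine ⟨⟨by linarith, by linarith⟩, ?_⟩
        rw [hystep i, ← hcoe, hind']
        exact circ_coe_sub_one _
  -- trap and high-zone lemmas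
  have htrap1 : ∀ i, u i ≤ a → u (i+1) ≤ a ∧ u i ≤ u (i+1) := by
    intro i hia
    have h0 := (hu i).1.1
    have h1 := (hu i).1.2
    have hFa : exampleF a (σ i) (u i) ≤ a := exF_le_a a ha1.le (σ i) h0 hia
    have hF1 : exampleF a (σ i) (u i) < 1 := lt_of_le_of_lt hFa ha1
    rw [huS i, if_pos hF1]
    exact ⟨hFa, exF_ge a ha1.le (σ i) h0 h1.le⟩
  have htrap : ∀ i j, i ≤ j → u i ≤ a → u j ≤ a ∧ u i ≤ u j := by
    intro i j hij hia
    induction j, hij using Nat.le_induction with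
    | base => exact ⟨hia, le_rfl⟩
    | succ j hij ih =>
      obtain ⟨ih1, ih2⟩ := ih
      obtain ⟨h3, h4⟩ := htrap1 j ih1
      exact ⟨h3, le_trans ih2 h4⟩
  have hhigh : ∀ i, 1 - c/4 ≤ u i → 1 - c/4 ≤ u (i+1) ∨ u (i+1) ≤ a := by
    intro i hi
    have h0 := (hu i).1.1
    have h1 := (hu i).1.2
    rw [huS i]
    split_ifs with hw
    · left
      exact le_trans hi (exF_ge a ha1.le (σ i) h0 h1.le)
    · right
      push_neg at hw
      have hb := exF_le_two_sub a ha0.le ha1.le (σ i) h0 h1.le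
      linarith
  have hprop : ∀ i j, i ≤ j → (u i ≤ a ∨ 1 - c/4 ≤ u i) → (u j ≤ a ∨ 1 - c/4 ≤ u j) := by
    intro i j hij hi
    induction j, hij using Nat.le_induction with
    | base => exact hi
    | succ j hij ih =>
      rcases ih with h | h
      · exact Or.inl (htrap1 j h).1
      · rcases hhigh j h with h2 | h2
        · exact Or.inr h2
        · exact Or.inl h2
  -- from the limsup bound, eventually the averages are < c/8
  have hbdd : Filter.IsBoundedUnder (· ≤ ·) Filter.atTop (fun n : ℕ =>
      (1/n : ℝ) * ∑ i ∈ Finset.range n, dist (IFSIter f σ i z) (xs i)) := by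
    refine ⟨1, Filter.eventually_map.mpr (Filter.Eventually.of_forall fun n => ?_)⟩
    rcases Nat.eq_zero_or_pos n with rfl | hn
    · simp
    · have hsum : ∑ i ∈ Finset.range n, dist (IFSIter f σ i z) (xs i) ≤ (n:ℝ) := by
        calc ∑ i ∈ Finset.range n, dist (IFSIter f σ i z) (xs i)
            ≤ ∑ _i ∈ Finset.range n, (1:ℝ) :=
              Finset.sum_le_sum (fun i _ => circ_dist_le_one _ _)
          _ = n := by simp
      have hn0 : (0:ℝ) < n := by exact_mod_cast hn
      calc (1/n : ℝ) * ∑ i ∈ Finset.range n, dist (IFSIter f σ i z) (xs i)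
          ≤ (1/n : ℝ) * n := mul_le_mul_of_nonneg_left hsum (by positivity)
        _ = 1 := by field_simp
  have hev := Filter.eventually_lt_of_limsup_lt hlim hbdd
  obtain ⟨N0, hN0⟩ := Filter.eventually_atTop.mp hev
  -- visiting lemma for blocks
  have hvisit : ∀ k : ℕ, N0 ≤ 4^(k+1) - 1 → ∀ g : AddCircle (1:ℝ),
      (∀ i, 4^k - 1 ≤ i → i < 4^(k+1) - 1 → xs i = g) →
      ∃ i, 4^k - 1 ≤ i ∧ i < 4^(k+1) - 1 ∧ dist (y i) g < c/4 := by
    intro k hk g hg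
    by_contra hcon
    push_neg at hcon
    have hpow : (4:ℕ)^(k+1) = 4 * 4^k := by rw [pow_succ]; ring
    have h4k : (1:ℕ) ≤ 4^k := Nat.one_le_pow _ _ (by norm_num)
    have hcard : (Finset.Ico (4^k - 1) (4^(k+1) - 1)).card = 3 * 4^k := by
      rw [Nat.card_Ico]
      omega
    have hlow : (3 * 4^k : ℝ) * (c/4) ≤
        ∑ i ∈ Finset.range (4^(k+1) - 1), dist (y i) (xs i) := by
      have hlow1 : (Finset.Ico (4^k - 1) (4^(k+1) - 1)).card • (c/4) ≤
          ∑ i ∈ Finset.Ico (4^k - 1) (4^(k+1) - 1), dist (y i) (xs i) := by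
        refine Finset.card_nsmul_le_sum _ _ _ ?_
        intro i hi
        rw [Finset.mem_Ico] at hi
        rw [hg i hi.1 hi.2]
        exact hcon i hi.1 hi.2
      rw [hcard] at hlow1
      refine le_trans (le_of_eq ?_) (le_trans hlow1
        (Finset.sum_le_sum_of_subset_of_nonneg ?_ (fun i _ _ => dist_nonneg)))
      · rw [nsmul_eq_mul]
        push_cast
        ring
      · intro i hi
        rw [Finset.mem_Ico] at hi
        rw [Finset.mem_range]
        exact hi.2
    have hup := hN0 (4^(k+1) - 1) hk
    have hnpos : (0:ℕ) < 4^(k+1) - 1 := by omega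
    have hnr : (0:ℝ) < ((4^(k+1) - 1 : ℕ) : ℝ) := by exact_mod_cast hnpos
    have hsum_lt : ∑ i ∈ Finset.range (4^(k+1) - 1), dist (y i) (xs i) <
        (c/8) * ((4^(k+1) - 1 : ℕ) : ℝ) := by
      have := (div_lt_iff₀ hnr).mp (by
        rw [div_eq_inv_mul, ← one_div]
        exact hup)
      linarith [this]
    have h1 : (4:ℕ)^(k+1) - 1 ≤ 4 * 4^k := by omega
    have hcast : ((4^(k+1) - 1 : ℕ) : ℝ) ≤ 4 * ((4^k : ℕ) : ℝ) := by
      calc ((4^(k+1) - 1 : ℕ) : ℝ) ≤ ((4 * 4^k : ℕ) : ℝ) := by exact_mod_cast h1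
        _ = 4 * ((4^k : ℕ) : ℝ) := by push_cast; ring
    have hc8 : (0:ℝ) ≤ c/8 := by positivity
    have hbig := lt_of_le_of_lt hlow hsum_lt
    have hbig2 : (c/8) * ((4^(k+1) - 1 : ℕ) : ℝ) ≤ (c/8) * (4 * ((4^k:ℕ):ℝ)) :=
      mul_le_mul_of_nonneg_left hcast hc8
    have hXr : ((4^k:ℕ):ℝ) = (4:ℝ)^k := by push_cast; ring
    rw [hXr] at hbig2
    have h4kr : (1:ℝ) ≤ (4:ℝ)^k := one_le_pow₀ (by norm_num)
    nlinarith [hbig, hbig2, h4kr, hcpos,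
      mul_le_mul_of_nonneg_left h4kr (le_of_lt hcpos)]
  -- xs is constant on each block
  have hxsblock : ∀ k i, 4^k - 1 ≤ i → i < 4^(k+1) - 1 →
      xs i = (if Even k then (0 : AddCircle (1:ℝ)) else ((a:ℝ) : AddCircle (1:ℝ))) := by
    intro k i hi1 hi2
    have h4k : (1:ℕ) ≤ 4^k := Nat.one_le_pow _ _ (by norm_num)
    have hlog : Nat.log 4 (i+1) = k :=
      Nat.log_eq_of_pow_le_of_lt_pow (by omega) (by omega)
    rw [hxs]
    simp only [hlog]
  set k0 := 2 * (N0 + 1) with hk0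
  have hk0even : Even k0 := even_two_mul _
  have hN0le : ∀ k, k0 ≤ k → N0 ≤ 4^(k+1) - 1 := by
    intro k hk
    have h1 : k + 1 < 4^(k+1) := Nat.lt_pow_self (by norm_num)
    omega
  obtain ⟨i2, hi2a, hi2b, hi2d⟩ := hvisit k0 (hN0le k0 le_rfl) 0
    (fun i h1 h2 => by rw [hxsblock k0 i h1 h2, if_pos hk0even])
  have hodd : ¬ Even (k0+1) := by simp [Nat.even_add_one, hk0even]
  obtain ⟨i3, hi3a, hi3b, hi3d⟩ := hvisit (k0+1) (hN0le (k0+1) (by omega))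
    ((a:ℝ) : AddCircle (1:ℝ))
    (fun i h1 h2 => by rw [hxsblock (k0+1) i h1 h2, if_neg hodd])
  have heven2 : Even (k0+2) := by
    obtain ⟨r, hr⟩ := hk0even
    exact ⟨r+1, by omega⟩
  obtain ⟨i4, hi4a, hi4b, hi4d⟩ := hvisit (k0+2) (hN0le (k0+2) (by omega)) 0
    (fun i h1 h2 => by rw [hxsblock (k0+2) i h1 h2, if_pos heven2])
  have hE : (4:ℕ)^(k0+1+1) = 4^(k0+2) := by ring
  have hi23 : i2 ≤ i3 := by omega
  have hi34 : i3 ≤ i4 := by omega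
  -- near-point coordinates
  have hnear0 : ∀ i, dist (y i) (0 : AddCircle (1:ℝ)) < c/4 → u i < c/4 ∨ 1 - c/4 < u i := by
    intro i hd
    have h0 := (hu i).1.1
    have h1 := (hu i).1.2
    rw [← (hu i).2, ← circ_zero] at hd
    have hlow := circ_dist_lower (s := u i) (t := 0)
      (by rw [sub_zero, abs_of_nonneg h0]; linarith)
    rw [sub_zero, abs_of_nonneg h0] at hlow
    rcases min_lt_iff.mp (lt_of_le_of_lt hlow hd) with h | h
    · exact Or.inl h
    · exact Or.inr (by linarith)
  have hnearA : ∀ i, dist (y i) ((a:ℝ) : AddCircle (1:ℝ)) < c/4 → |u i - a| < c/4 := by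
    intro i hd
    have h0 := (hu i).1.1
    have h1 := (hu i).1.2
    rw [← (hu i).2] at hd
    have habs : |u i - a| ≤ 1 := by
      rw [abs_le]
      constructor <;> linarith
    have hlow := circ_dist_lower (s := u i) (t := a) habs
    rcases min_lt_iff.mp (lt_of_le_of_lt hlow hd) with h | h
    · exact h
    · exfalso
      have hub : |u i - a| ≤ 1 - c := abs_le.mpr ⟨by linarith, by linarith⟩
      linarith
  -- conclude
  have h2 := hnear0 i2 hi2d
  have h3 := hnearA i3 hi3d
  have h4 := hnear0 i4 hi4d
  have habs3 := abs_lt.mp h3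
  have hstart : u i2 ≤ a ∨ 1 - c/4 ≤ u i2 := by
    rcases h2 with h | h
    · exact Or.inl (by linarith)
    · exact Or.inr (by linarith)
  have h33 := hprop i2 i3 hi23 hstart
  have hui3 : u i3 ≤ a := by
    rcases h33 with h | h
    · exact h
    · exfalso
      linarith [habs3.2]
  have h34 := htrap i3 i4 hi34 hui3
  rcases h4 with h | h
  · linarith [h34.2, habs3.1]
  · linarith [h34.1]

end NoShadow

/-- the IFS on the circle `ℝ/ℤ` induced by the two maps `exampleF a`
does not have the average shadowing property, yet every point of the circle is chain
recurrent for it. -/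
theorem example_chainRecurrent_not_avgShadowing
    (a : ℝ) (ha0 : 0 < a) (ha1 : a < 1)
    (f : Fin 2 → AddCircle (1 : ℝ) → AddCircle (1 : ℝ))
    (hfc : ∀ i : Fin 2, Continuous (f i))
    (hind : ∀ i : Fin 2, ∀ t ∈ Set.Ico (0 : ℝ) 1,
      f i ((t : ℝ) : AddCircle (1 : ℝ)) = ((exampleF a i t : ℝ) : AddCircle (1 : ℝ))) :
    ¬ HasAvgShadowing f ∧ ∀ x : AddCircle (1 : ℝ), ChainRecurrentPt f x :=
  ⟨aux_noshadow a ha0 ha1 f hind, aux_chainRec a ha0 ha1 f hind⟩
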